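/- Let G be an infinite group in which every proper nontrivial subgroup has order a fixed prime p, and let H be a proper nontrivial subgroup of G. Then the action of G by right multiplication on the coset space G/H is faithful and primitive, and every nontrivial orbit of the point stabiliser of the coset H on G/H has cardinality exactly p. -/

import Mathlib

/-- A permutation action is primitive: it is transitive and the only
`G`-invariant equivalence relations are the trivial and universal ones. -/
def IsPrimitiveAction (G : Type*) (Ω : Type*) [Group G] [MulAction G Ω] : Prop :=
  (∀ a b : Ω, ∃ g : G, g • a = b) ∧
  ∀ r : Setoid Ω, (∀ (g : G) (x y : Ω), r.r x y → r.r (g • x) (g • y)) → r = ⊥ ∨ r = ⊤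

/-- An infinite group cannot have only trivial subgroups. -/
private lemma aux_cyclic {Q : Type*} [Group Q] [Infinite Q]
    (h : ∀ M : Subgroup Q, M = ⊥ ∨ M = ⊤) : False := by
  obtain ⟨q, hq⟩ := exists_ne (1 : Q)
  have h1 : Subgroup.zpowers q = ⊤ :=
    (h _).resolve_left (Subgroup.zpowers_ne_bot.2 hq)
  have hfin : IsOfFinOrder q := by
    by_cases h2 : q ^ 2 = 1
    · exact isOfFinOrder_iff_pow_eq_one.2 ⟨2, by norm_num, h2⟩
    · have h3 : Subgroup.zpowers (q ^ 2) = ⊤ :=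
        (h _).resolve_left (Subgroup.zpowers_ne_bot.2 h2)
      have hm : q ∈ Subgroup.zpowers (q ^ 2) := h3 ▸ Subgroup.mem_top q
      obtain ⟨k, hk⟩ := hm
      have hk' : q ^ (2 * k - 1) = 1 := by
        have h4 : (q ^ ((2 : ℤ) * k) : Q) = q := by
          rw [zpow_mul]; exact_mod_cast hk
        rw [zpow_sub, h4, zpow_one, mul_inv_cancel]
      exact isOfFinOrder_iff_zpow_eq_one.2 ⟨2 * k - 1, by omega, hk'⟩
  have hfinset : (Subgroup.zpowers q : Set Q).Finite := finite_zpowers.2 hfin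
  rw [h1] at hfinset
  have : Finite Q := Set.finite_univ_iff.1 (by simpa using hfinset)
  exact not_finite_iff_infinite.2 ‹Infinite Q› this

/-- Maximality of proper nontrivial subgroups. -/
private lemma aux_max {G : Type*} [Group G] (p : ℕ) (hp : p.Prime)
    (hsub : ∀ K : Subgroup G, K ≠ ⊥ → K ≠ ⊤ → Nat.card K = p)
    {K L : Subgroup G} (hKbot : K ≠ ⊥) (hKL : K < L) : L = ⊤ := by
  by_contra hL
  have hKtop : K ≠ ⊤ := ne_top_of_lt hKL
  have hLbot : L ≠ ⊥ := by
    rintro rfl; exact hKbot (le_bot_iff.1 hKL.le)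
  have hcK : Nat.card K = p := hsub K hKbot hKtop
  have hcL : Nat.card L = p := hsub L hLbot hL
  have : Finite L := Nat.finite_of_card_ne_zero (by rw [hcL]; exact hp.pos.ne')
  exact hKL.ne (Subgroup.eq_of_le_of_card_ge hKL.le (by rw [hcK, hcL]))

/-- There is no proper nontrivial normal subgroup. -/
private lemma aux_nonormal {G : Type*} [Group G] [Infinite G] (p : ℕ) (hp : p.Prime)
    (hsub : ∀ K : Subgroup G, K ≠ ⊥ → K ≠ ⊤ → Nat.card K = p)
    (N : Subgroup G) (hN : N.Normal) (hbot : N ≠ ⊥) (htop : N ≠ ⊤) : False := by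
  have hNp : Nat.card N = p := hsub N hbot htop
  have hNfin : Finite N := Nat.finite_of_card_ne_zero (by rw [hNp]; exact hp.pos.ne')
  have hQinf : Infinite (G ⧸ N) := by
    by_contra h
    rw [not_infinite_iff_finite] at h
    exact not_finite_iff_infinite.2 ‹Infinite G›
      (Finite.of_equiv _ (Subgroup.groupEquivQuotientProdSubgroup (s := N)).symm)
  refine aux_cyclic (Q := G ⧸ N) (fun M => ?_)
  set f : G →* G ⧸ N := QuotientGroup.mk' N
  have hfsurj : Function.Surjective f := QuotientGroup.mk'_surjective N
  set K : Subgroup G := M.comap f with hK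
  have hNK : N ≤ K := by
    intro n hn
    have h1 : f n = 1 := by
      have : n ∈ f.ker := by rw [QuotientGroup.ker_mk']; exact hn
      exact this
    exact Subgroup.mem_comap.2 (by rw [h1]; exact M.one_mem)
  by_cases hKtop : K = ⊤
  · right
    refine Subgroup.comap_injective hfsurj ?_
    rw [Subgroup.comap_top]
    exact hKtop
  · left
    have hKbot : K ≠ ⊥ := fun h => hbot (le_bot_iff.1 (h ▸ hNK))
    have hcK : Nat.card K = p := hsub K hKbot hKtop
    have : Finite K := Nat.finite_of_card_ne_zero (by rw [hcK]; exact hp.pos.ne')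
    have hNKeq : N = K := Subgroup.eq_of_le_of_card_ge hNK (by rw [hNp, hcK])
    refine Subgroup.comap_injective hfsurj ?_
    rw [MonoidHom.comap_bot, QuotientGroup.ker_mk']
    exact hNKeq.symm

theorem stmt5 {G : Type*} [Group G] [Infinite G] (p : ℕ) (hp : p.Prime)
    (hsub : ∀ K : Subgroup G, K ≠ ⊥ → K ≠ ⊤ → Nat.card K = p)
    (H : Subgroup G) (hHbot : H ≠ ⊥) (hHtop : H ≠ ⊤) :
    (∀ g : G, (∀ x : G ⧸ H, g • x = x) → g = 1) ∧
    IsPrimitiveAction G (G ⧸ H) ∧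
    (∀ x : G ⧸ H, x ≠ ((1 : G) : G ⧸ H) →
      Nat.card (MulAction.orbit (MulAction.stabilizer G ((1 : G) : G ⧸ H)) x) = p) := by
  have hHp : Nat.card H = p := hsub H hHbot hHtop
  have hHfin : Finite H := Nat.finite_of_card_ne_zero (by rw [hHp]; exact hp.pos.ne')
  -- Faithfulness
  refine ⟨?_, ⟨?_, ?_⟩, ?_⟩
  · intro g hg
    have hcore' : g⁻¹ ∈ H.normalCore := by
      intro b
      have := hg ((b⁻¹ : G) : G ⧸ H)
      rw [MulAction.Quotient.smul_mk, QuotientGroup.eq] at this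
      simpa [mul_assoc] using this
    have hcore : g ∈ H.normalCore := by
      simpa using H.normalCore.inv_mem hcore'
    have hbot : H.normalCore = ⊥ := by
      by_contra h
      exact aux_nonormal p hp hsub H.normalCore H.normalCore_normal h
        (fun ht => hHtop (top_le_iff.1 (ht ▸ H.normalCore_le)))
    simpa [hbot] using hcore
  -- Transitivity
  · intro a b
    induction a using QuotientGroup.induction_on with
    | H a =>
    induction b using QuotientGroup.induction_on with
    | H b =>
    exact ⟨b * a⁻¹, by rw [MulAction.Quotient.smul_mk]; simp [smul_eq_mul, mul_assoc]⟩
  -- Primitivity (block condition)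
  · intro r hr
    by_cases hrbot : r = ⊥
    · exact Or.inl hrbot
    right
    -- there exist distinct related elements
    have : ∃ x y : G ⧸ H, r.r x y ∧ x ≠ y := by
      by_contra h
      push_neg at h
      apply hrbot
      ext x y
      constructor
      · intro hxy
        by_contra hne
        exact hne (h x y hxy)
      · rintro rfl; exact r.refl x
    obtain ⟨x, y, hxy, hne⟩ := this
    -- move x to the identity coset
    set e : G ⧸ H := ((1 : G) : G ⧸ H)
    obtain ⟨a, ha⟩ : ∃ a : G, a • x = e := by
      induction x using QuotientGroup.induction_on with
      | H x => exact ⟨x⁻¹, by rw [MulAction.Quotient.smul_mk]; simp [smul_eq_mul]; rfl⟩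
    have hez : r.r e (a • y) := ha ▸ hr a x y hxy
    have hezne : e ≠ a • y := fun h => hne (smul_left_cancel a (ha.trans (h.trans rfl)))
    -- the subgroup of elements moving e within its r-class
    set K : Subgroup G :=
      { carrier := { g : G | r.r e (g • e) }
        one_mem' := by simpa using r.refl e
        mul_mem' := by
          intro g g' hgmem hg'mem
          have h1 : r.r (g • e) (g • (g' • e)) := hr g _ _ hg'mem
          have : r.r e (g • (g' • e)) := r.trans hgmem h1
          simpa [mul_smul] using this
        inv_mem' := by
          intro g hgmem
          have h1 : r.r (g⁻¹ • e) (g⁻¹ • (g • e)) := hr g⁻¹ _ _ hgmem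
          have : r.r (g⁻¹ • e) e := by simpa using h1
          exact r.symm this } with hKdef
    have hstab : ∀ g : G, g • e = e ↔ g ∈ H := by
      intro g
      have := MulAction.stabilizer_quotient H
      constructor
      · intro hg
        have : g ∈ MulAction.stabilizer G e := hg
        rwa [MulAction.stabilizer_quotient] at this
      · intro hg
        have : g ∈ MulAction.stabilizer G e := by
          rw [MulAction.stabilizer_quotient]; exact hg
        exact this
    have hHK : H ≤ K := by
      intro h hh
      show r.r e (h • e)
      rw [(hstab h).2 hh]
    -- K strictly contains H
    obtain ⟨b, hb⟩ : ∃ b : G, b • e = a • y := by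
      induction (a • y) using QuotientGroup.induction_on with
      | H z => exact ⟨z, by rw [MulAction.Quotient.smul_mk]; simp [smul_eq_mul]⟩
    have hbK : b ∈ K := by show r.r e (b • e); rw [hb]; exact hez
    have hbH : b ∉ H := fun h => hezne (by rw [← hb, (hstab b).2 h])
    have hHKlt : H < K := lt_of_le_of_ne hHK (fun h => hbH (h ▸ hbK))
    have hKtop : K = ⊤ := aux_max p hp hsub hHbot hHKlt
    -- hence every element is related to e
    have hall : ∀ z : G ⧸ H, r.r e z := by
      intro z
      obtain ⟨c, hc⟩ : ∃ c : G, c • e = z := by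
        induction z using QuotientGroup.induction_on with
        | H z => exact ⟨z, by rw [MulAction.Quotient.smul_mk]; simp [smul_eq_mul]⟩
      have : c ∈ K := hKtop ▸ Subgroup.mem_top c
      have := this
      rw [← hc]
      exact this
    ext u v
    exact ⟨fun _ => trivial, fun _ => r.trans (r.symm (hall u)) (hall v)⟩
  -- Orbits of the point stabilizer
  · intro x hx
    set e : G ⧸ H := ((1 : G) : G ⧸ H)
    set S := MulAction.stabilizer G e with hSdef
    have hSH : S = H := MulAction.stabilizer_quotient H
    have hSp : Nat.card S = p := by rw [hSH]; exact hHp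
    have hSfin : Finite S := Nat.finite_of_card_ne_zero (by rw [hSp]; exact hp.pos.ne')
    -- orbit-stabilizer
    have hos : Nat.card S = Nat.card (S ⧸ MulAction.stabilizer S x) *
        Nat.card (MulAction.stabilizer S x) :=
      Subgroup.card_eq_card_quotient_mul_card_subgroup _
    have hcard : Nat.card (MulAction.orbit S x) * Nat.card (MulAction.stabilizer S x) = p := by
      rw [Nat.card_congr (MulAction.orbitEquivQuotientStabilizer S x), ← hos, hSp]
    have hdvd : Nat.card (MulAction.orbit S x) ∣ p :=
      ⟨Nat.card (MulAction.stabilizer S x), hcard.symm⟩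
    rcases (Nat.Prime.eq_one_or_self_of_dvd hp _ hdvd) with h1 | h1
    · exfalso
      -- orbit is a singleton: every element of H fixes x
      have horb : ∀ s : S, s • x = x := by
        have hsub1 : Subsingleton (MulAction.orbit S x) :=
          (Nat.card_eq_one_iff_unique.1 h1).1
        intro s
        have h2 : (⟨s • x, MulAction.mem_orbit x s⟩ : MulAction.orbit S x) =
            ⟨x, MulAction.mem_orbit_self x⟩ := Subsingleton.elim _ _
        exact congrArg Subtype.val h2
      obtain ⟨g, rfl⟩ : ∃ g : G, ((g : G) : G ⧸ H) = x := ⟨x.out, QuotientGroup.out_eq' x⟩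
      have hgH : g ∉ H := by
        intro h
        exact hx (QuotientGroup.eq.2 (by simpa using H.inv_mem h))
      -- every h ∈ H satisfies g⁻¹ * h * g ∈ H
      have hconj : ∀ h ∈ H, g⁻¹ * h * g ∈ H := by
        intro h hh
        have hhs : h⁻¹ ∈ S := by rw [hSH]; exact H.inv_mem hh
        have := horb ⟨h⁻¹, hhs⟩
        have h2 : (h⁻¹ : G) • ((g : G) : G ⧸ H) = ((g : G) : G ⧸ H) := this
        rw [MulAction.Quotient.smul_mk, QuotientGroup.eq] at h2
        simpa [smul_eq_mul, mul_assoc] using h2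
      -- so the conjugate subgroup g⁻¹ H g equals H, hence g normalizes H
      set K : Subgroup G := H.map ((MulAut.conj g⁻¹).toMonoidHom) with hKdef
      have hKH : K ≤ H := by
        rintro _ ⟨h, hh, rfl⟩
        simpa [MulAut.conj, mul_assoc] using hconj h hh
      have hKcard : Nat.card K = Nat.card H :=
        (Nat.card_congr (Subgroup.equivMapOfInjective H _ (MulAut.conj g⁻¹).injective).toEquiv).symm
      have hKeq : K = H := Subgroup.eq_of_le_of_card_ge hKH hKcard.ge
      have hgnorm : g ∈ Subgroup.normalizer (H : Set G) := by
        rw [Subgroup.mem_normalizer_iff]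
        intro h
        constructor
        · intro hh
          have : h ∈ K := hKeq.symm ▸ hh
          obtain ⟨h', hh', hmap⟩ := this
          have : g⁻¹ * h' * g = h := by simpa [MulAut.conj, mul_assoc] using hmap
          have h3 : g * h * g⁻¹ = h' := by rw [← this]; group
          rw [h3]; exact hh'
        · intro hh
          have : g⁻¹ * (g * h * g⁻¹) * g ∈ H := hconj _ hh
          simpa [mul_assoc] using this
      have hlt : H < Subgroup.normalizer (H : Set G) :=
        lt_of_le_of_ne Subgroup.le_normalizer (fun hhn => hgH (hhn ▸ hgnorm))
      have hntop : Subgroup.normalizer (H : Set G) = ⊤ := aux_max p hp hsub hHbot hlt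
      have hnormal : H.Normal := Subgroup.normalizer_eq_top_iff.1 hntop
      exact aux_nonormal p hp hsub H hnormal hHbot hHtop
    · exact h1
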